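/- Let ρ be a density matrix on ℂ^{d_a} ⊗ ℂ^{d_b} and ρ^{T₂} its partial transpose on the second factor. Let V_{1̄⋯(2k−1)‾} be the k-cyclic permutation acting on the k subsystems labelled 1̄,3̄,…,(2k−1)‾ and V_{2⋯2k} the k-cyclic permutation on subsystems 2,4,…,2k. Then tr[(ρ^{T₂})^k] = tr[V_{1̄⋯(2k−1)‾} V_{2⋯2k}† (⊗_{l=1}^k ρ_{(2l−1)‾, 2l})], i.e., the k-th moment of the partial transpose equals the expectation of a product of two cyclic permutations on k copies of ρ. -/

import Mathlib

open ComplexOrder Matrix Kronecker BigOperators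

/-- Partial transpose on the second factor: `(ρ^{T₂})_{ij,kl} = ρ_{il,kj}`. -/
def ptranspose (da db : ℕ) (ρ : Matrix (Fin da × Fin db) (Fin da × Fin db) ℂ) :
    Matrix (Fin da × Fin db) (Fin da × Fin db) ℂ :=
  Matrix.of fun p q => ρ (p.1, q.2) (q.1, p.2)

section Aux

variable {n : Type*} [Fintype n] [DecidableEq n] {R : Type*} [CommRing R]

private lemma entry_path (N : Matrix n n R) : ∀ (k : ℕ) (x y : n),
    (N ^ (k+1)) x y = ∑ g : Fin k → n,
      ∏ i : Fin (k+1), N ((Fin.cons x (Fin.snoc g y) : Fin (k+2) → n) i.castSucc)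
        ((Fin.cons x (Fin.snoc g y) : Fin (k+2) → n) i.succ) := by
  intro k
  induction k with
  | zero =>
    intro x y
    simp [Fin.prod_univ_one, Fin.snoc]
  | succ k ih =>
    intro x y
    rw [pow_succ', Matrix.mul_apply]
    simp_rw [ih, Finset.mul_sum]
    have := Fintype.sum_equiv (Fin.consEquiv (fun _ : Fin (k+1) => n))
      (fun p : n × (Fin k → n) => ∏ i : Fin (k+2),
        N ((Fin.cons x (Fin.snoc (Fin.cons p.1 p.2) y) : Fin (k+3) → n) i.castSucc)
          ((Fin.cons x (Fin.snoc (Fin.cons p.1 p.2) y) : Fin (k+3) → n) i.succ))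
      (fun g => ∏ i : Fin (k+2), N ((Fin.cons x (Fin.snoc g y) : Fin (k+3) → n) i.castSucc)
        ((Fin.cons x (Fin.snoc g y) : Fin (k+3) → n) i.succ))
      (fun p => rfl)
    rw [← this, Fintype.sum_prod_type]
    refine Finset.sum_congr rfl fun z _ => Finset.sum_congr rfl fun g _ => ?_
    have hw : ∀ j : Fin (k+2), (Fin.cons z (Fin.snoc g y) : Fin (k+2) → n) j
        = (Fin.cons x (Fin.snoc (Fin.cons z g) y) : Fin (k+3) → n) j.succ := by
      intro j
      rw [Fin.cons_succ, Fin.cons_snoc_eq_snoc_cons]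
    conv_rhs => rw [Fin.prod_univ_succ]
    congr 1
    · refine Finset.prod_congr rfl fun i _ => ?_
      rw [hw i.castSucc, hw i.succ, Fin.succ_castSucc]

private lemma trace_pow_path (N : Matrix n n R) (k : ℕ) :
    (N ^ (k+1)).trace = ∑ g : Fin (k+1) → n, ∏ l, N (g l) (g (finRotate (k+1) l)) := by
  rw [Matrix.trace]
  simp_rw [Matrix.diag, entry_path N k]
  refine Eq.trans (Fintype.sum_prod_type (fun p : n × (Fin k → n) =>
      ∏ i : Fin (k+1), N ((Fin.cons p.1 (Fin.snoc p.2 p.1) : Fin (k+2) → n) i.castSucc)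
        ((Fin.cons p.1 (Fin.snoc p.2 p.1) : Fin (k+2) → n) i.succ))).symm ?_
  refine Fintype.sum_equiv (Fin.consEquiv (fun _ : Fin (k+1) => n))
    (fun p : n × (Fin k → n) =>
      ∏ i : Fin (k+1), N ((Fin.cons p.1 (Fin.snoc p.2 p.1) : Fin (k+2) → n) i.castSucc)
        ((Fin.cons p.1 (Fin.snoc p.2 p.1) : Fin (k+2) → n) i.succ))
    (fun G : Fin (k+1) → n => ∏ l, N (G l) (G (finRotate (k+1) l))) (fun p => ?_)
  obtain ⟨x, g⟩ := p
  simp only [Fin.consEquiv_apply]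
  refine Finset.prod_congr rfl fun i _ => ?_
  have hv : ∀ j : Fin (k+2), (Fin.cons x (Fin.snoc g x) : Fin (k+2) → n) j
      = (Fin.snoc (Fin.cons x g : Fin (k+1) → n) x : Fin (k+2) → n) j := by
    intro j; rw [Fin.cons_snoc_eq_snoc_cons]
  rw [hv, hv, Fin.snoc_castSucc]
  congr 1
  refine Fin.lastCases ?_ (fun j => ?_) i
  · rw [Fin.succ_last, Fin.snoc_last, finRotate_last, Fin.cons_zero]
  · rw [Fin.succ_castSucc, Fin.snoc_castSucc, finRotate_succ_apply, Fin.coeSucc_eq_succ]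

private lemma rhs_trace (da db m : ℕ) (ρ : Matrix (Fin da × Fin db) (Fin da × Fin db) ℂ) :
    ((Matrix.of fun p q : (Fin (m+1) → Fin da) × (Fin (m+1) → Fin db) =>
        if q.1 = p.1 ∘ ⇑(finRotate (m+1)) ∧ q.2 = p.2 then (1 : ℂ) else 0) *
     (Matrix.of fun p q : (Fin (m+1) → Fin da) × (Fin (m+1) → Fin db) =>
        if q.1 = p.1 ∧ q.2 = p.2 ∘ ⇑(finRotate (m+1)) then (1 : ℂ) else 0)ᴴ *
     (Matrix.of fun p q : (Fin (m+1) → Fin da) × (Fin (m+1) → Fin db) =>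
        ∏ l, ρ (p.1 l, p.2 l) (q.1 l, q.2 l))).trace
  = ∑ p : (Fin (m+1) → Fin da) × (Fin (m+1) → Fin db),
      ∏ l, ρ (p.1 (finRotate (m+1) l), p.2 ((finRotate (m+1)).symm l)) (p.1 l, p.2 l) := by
  set e : Equiv.Perm (Fin (m+1)) := finRotate (m+1) with he
  set A := (Matrix.of fun p q : (Fin (m+1) → Fin da) × (Fin (m+1) → Fin db) =>
        if q.1 = p.1 ∘ ⇑e ∧ q.2 = p.2 then (1 : ℂ) else 0) with hA
  set B := (Matrix.of fun p q : (Fin (m+1) → Fin da) × (Fin (m+1) → Fin db) =>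
        if q.1 = p.1 ∧ q.2 = p.2 ∘ ⇑e then (1 : ℂ) else 0) with hB
  set C := (Matrix.of fun p q : (Fin (m+1) → Fin da) × (Fin (m+1) → Fin db) =>
        ∏ l, ρ (p.1 l, p.2 l) (q.1 l, q.2 l)) with hC
  have hAB : ∀ p r : (Fin (m+1) → Fin da) × (Fin (m+1) → Fin db),
      (A * Bᴴ) p r = if r = (p.1 ∘ ⇑e, p.2 ∘ ⇑e.symm) then (1:ℂ) else 0 := by
    intro p r
    rw [Matrix.mul_apply]
    rw [Finset.sum_eq_single ((p.1 ∘ ⇑e, p.2) : (Fin (m+1) → Fin da) × (Fin (m+1) → Fin db))]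
    · simp only [hA, hB, Matrix.of_apply, Matrix.conjTranspose_apply]
      rw [apply_ite (star : ℂ → ℂ), star_one, star_zero]
      have hiff : (p.1 ∘ ⇑e = r.1 ∧ p.2 = r.2 ∘ ⇑e) ↔ r = (p.1 ∘ ⇑e, p.2 ∘ ⇑e.symm) := by
        constructor
        · rintro ⟨h1, h2⟩
          refine Prod.ext h1.symm (funext fun x => ?_)
          show r.2 x = p.2 (e.symm x)
          rw [h2]
          simp
        · rintro rfl
          exact ⟨rfl, by funext x; simp⟩
      rw [if_congr hiff rfl rfl]
      simp
    · intro q _ hq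
      simp only [hA, Matrix.of_apply]
      rw [if_neg, zero_mul]
      rintro ⟨h1, h2⟩
      exact hq (Prod.ext h1 h2)
    · intro h
      exact absurd (Finset.mem_univ _) h
  rw [Matrix.trace]
  refine Finset.sum_congr rfl fun p _ => ?_
  rw [Matrix.diag_apply, Matrix.mul_apply]
  simp_rw [hAB, boole_mul]
  rw [Finset.sum_ite_eq' Finset.univ ((p.1 ∘ ⇑e, p.2 ∘ ⇑e.symm)) (fun r => C r p),
    if_pos (Finset.mem_univ _)]
  rfl

end Aux

/-- `tr[(ρ^{T₂})^k] = tr[V_{1̄⋯(2k−1)‾} V_{2⋯2k}† (⊗_{l=1}^k ρ)]`: the `k`-th moment of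
the partial transpose is the expectation of two cyclic permutations (one on the `a`
slots, the adjoint of one on the `b` slots) on `k` copies of `ρ`. -/
theorem stmt9 (da db k : ℕ) (hk : 0 < k)
    (ρ : Matrix (Fin da × Fin db) (Fin da × Fin db) ℂ)
    (hρ : ρ.PosSemidef) (htr : ρ.trace = 1) :
    ((ptranspose da db ρ) ^ k).trace
      = ((Matrix.of fun p q : (Fin k → Fin da) × (Fin k → Fin db) =>
            if q.1 = p.1 ∘ ⇑(finRotate k) ∧ q.2 = p.2 then (1 : ℂ) else 0) *
         (Matrix.of fun p q : (Fin k → Fin da) × (Fin k → Fin db) =>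
            if q.1 = p.1 ∧ q.2 = p.2 ∘ ⇑(finRotate k) then (1 : ℂ) else 0)ᴴ *
         (Matrix.of fun p q : (Fin k → Fin da) × (Fin k → Fin db) =>
            ∏ l, ρ (p.1 l, p.2 l) (q.1 l, q.2 l))).trace := by
  obtain ⟨m, rfl⟩ : ∃ m, k = m + 1 := ⟨k - 1, (Nat.succ_pred_eq_of_pos hk).symm⟩
  rw [rhs_trace da db m ρ]
  set e : Equiv.Perm (Fin (m+1)) := finRotate (m+1) with he
  have h1 : ((ptranspose da db ρ) ^ (m+1)).trace
      = (((ptranspose da db ρ)ᵀ) ^ (m+1)).trace := by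
    rw [← Matrix.transpose_pow, Matrix.trace_transpose]
  rw [h1, trace_pow_path]
  -- step 1: split the pair-valued functions into pairs of functions
  have step1 : (∑ g : Fin (m+1) → Fin da × Fin db,
        ∏ l, (ptranspose da db ρ)ᵀ (g l) (g (e l)))
      = ∑ p : (Fin (m+1) → Fin da) × (Fin (m+1) → Fin db),
        ∏ l, ρ (p.1 (e l), p.2 l) (p.1 l, p.2 (e l)) := by
    refine (Fintype.sum_equiv
      ((Equiv.arrowProdEquivProdArrow (Fin (m+1)) (fun _ => Fin da) (fun _ => Fin db)).symm)
      (fun p : (Fin (m+1) → Fin da) × (Fin (m+1) → Fin db) =>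
        ∏ l, ρ (p.1 (e l), p.2 l) (p.1 l, p.2 (e l)))
      (fun g : Fin (m+1) → Fin da × Fin db =>
        ∏ l, (ptranspose da db ρ)ᵀ (g l) (g (e l)))
      (fun p => ?_)).symm
    refine Finset.prod_congr rfl fun l _ => ?_
    simp [Equiv.arrowProdEquivProdArrow, ptranspose, Matrix.transpose_apply]
  rw [step1]
  -- step 2: change of variables b ↦ b ∘ e
  refine Fintype.sum_equiv
    (Equiv.prodCongr (Equiv.refl ((Fin (m+1) → Fin da)))
      (Equiv.arrowCongr e.symm (Equiv.refl (Fin db))))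
    (fun p : (Fin (m+1) → Fin da) × (Fin (m+1) → Fin db) =>
      ∏ l, ρ (p.1 (e l), p.2 l) (p.1 l, p.2 (e l)))
    (fun p : (Fin (m+1) → Fin da) × (Fin (m+1) → Fin db) =>
      ∏ l, ρ (p.1 (e l), p.2 (e.symm l)) (p.1 l, p.2 l))
    (fun p => ?_)
  refine Finset.prod_congr rfl fun l _ => ?_
  simp [Equiv.arrowCongr, Equiv.apply_symm_apply]
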